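/- Let F be an induced forest in G'. If F contains two vertices from Z(i) for some i ∈ [k], then F contains no vertex from {α^i_x, α^i_y}; likewise, if F contains two vertices from R(i,j) for some 1 ≤ i < j ≤ k, then F contains no vertex from {α^{(i,j)}_x, α^{(i,j)}_y}. -/

import Mathlib

/-- Vertex names for the graph `G'` built from a Multicolored Clique instance. -/
inductive MV (k p : ℕ) : Type where
  | z : Fin k → Fin p → MV k p
  | r : Fin k → Fin k → Fin p → Fin p → MV k p
  | ax : Fin k → MV k p
  | ay : Fin k → MV k p
  | bx : Fin k → Fin k → MV k p
  | byy : Fin k → Fin k → MV k p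
  | beta : MV k p

/-- Which vertex names actually occur as vertices of `G'`. -/
def MVValid {k p : ℕ} (G : SimpleGraph (Fin k × Fin p)) : MV k p → Prop
  | MV.r i j s t => i < j ∧ G.Adj (i, s) (j, t)
  | MV.bx i j => i < j
  | MV.byy i j => i < j
  | _ => True

/-- The vertex set of `G'`. -/
abbrev MVert (k p : ℕ) (G : SimpleGraph (Fin k × Fin p)) : Type :=
  {v : MV k p // MVValid G v}

/-- One direction of the adjacency relation of `G'` (it is symmetrized below). -/
def MVAdj {k p : ℕ} : MV k p → MV k p → Prop
  | MV.z i s, MV.z i' s' => i = i' ∧ s ≠ s'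
  | MV.r i j s t, MV.r i' j' s' t' => i = i' ∧ j = j' ∧ (s ≠ s' ∨ t ≠ t')
  | MV.z i h, MV.r i' j' s t => (i = i' ∧ h ≠ s) ∨ (i = j' ∧ h ≠ t)
  | MV.ax i, MV.z i' _ => i = i'
  | MV.ay i, MV.z i' _ => i = i'
  | MV.bx i j, MV.r i' j' _ _ => i = i' ∧ j = j'
  | MV.byy i j, MV.r i' j' _ _ => i = i' ∧ j = j'
  | MV.beta, MV.z _ _ => True
  | MV.beta, MV.r _ _ _ _ => True
  | _, _ => False

/-- The graph `G'`. -/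
def Gp {k p : ℕ} (G : SimpleGraph (Fin k × Fin p)) : SimpleGraph (MVert k p G) :=
  SimpleGraph.fromRel (fun a b => MVAdj a.1 b.1)

/-- The set `Z(i)`. -/
def Zset {k p : ℕ} (G : SimpleGraph (Fin k × Fin p)) (i : Fin k) : Set (MVert k p G) :=
  {v | ∃ s, v.1 = MV.z i s}

/-- The set `R(i,j)`. -/
def Rset {k p : ℕ} (G : SimpleGraph (Fin k × Fin p)) (i j : Fin k) : Set (MVert k p G) :=
  {v | ∃ s t, v.1 = MV.r i j s t}

/-- The set `Z_{+α}(i)`. -/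
def ZAset {k p : ℕ} (G : SimpleGraph (Fin k × Fin p)) (i : Fin k) : Set (MVert k p G) :=
  Zset G i ∪ {v | v.1 = MV.ax i ∨ v.1 = MV.ay i}

/-- The set `R_{+α}(i,j)`. -/
def RAset {k p : ℕ} (G : SimpleGraph (Fin k × Fin p)) (i j : Fin k) : Set (MVert k p G) :=
  Rset G i j ∪ {v | v.1 = MV.bx i j ∨ v.1 = MV.byy i j}

/-- The set `A` of all `α`-vertices. -/
def Aset {k p : ℕ} (G : SimpleGraph (Fin k × Fin p)) : Set (MVert k p G) :=
  {v | (∃ i, v.1 = MV.ax i ∨ v.1 = MV.ay i) ∨ (∃ i j, v.1 = MV.bx i j ∨ v.1 = MV.byy i j)}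

/-- `F` is an induced forest in `G'`: the induced subgraph has no cycle. -/
def IsInducedForest {k p : ℕ} (G : SimpleGraph (Fin k × Fin p))
    (F : Set (MVert k p G)) : Prop :=
  ((Gp G).induce F).IsAcyclic

open SimpleGraph in
lemma not_acyclic_of_triangle {V : Type*} {H : SimpleGraph V} {a b c : V}
    (hab : H.Adj a b) (hbc : H.Adj b c) (hca : H.Adj c a) : ¬ H.IsAcyclic := by
  intro h
  have h1 := hab.ne; have h2 := hbc.ne; have h3 := hca.ne
  exact h (Walk.cons hab (Walk.cons hbc (Walk.cons hca Walk.nil)))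
    (by simp [Walk.isCycle_def, Walk.isTrail_def, *, Sym2.eq, Sym2.rel_iff',
          Ne.symm h3, Ne.symm h1, Ne.symm h2])


/-- if an induced forest in `G'` contains two vertices of `Z(i)`, it contains
neither `α^i_x` nor `α^i_y`; likewise for `R(i,j)` and `α^{(i,j)}_x, α^{(i,j)}_y`. -/
theorem stmt8 (k p : ℕ) (hk : 2 ≤ k) (hp : 1 ≤ p) (G : SimpleGraph (Fin k × Fin p))
    (F : Set (MVert k p G)) (hF : IsInducedForest G F) :
    (∀ i : Fin k, ∀ a b : MVert k p G, a ∈ F ∩ Zset G i → b ∈ F ∩ Zset G i → a ≠ b →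
      ∀ v ∈ F, v.1 ≠ MV.ax i ∧ v.1 ≠ MV.ay i) ∧
    (∀ i j : Fin k, i < j → ∀ a b : MVert k p G,
      a ∈ F ∩ Rset G i j → b ∈ F ∩ Rset G i j → a ≠ b →
      ∀ v ∈ F, v.1 ≠ MV.bx i j ∧ v.1 ≠ MV.byy i j) := by
  constructor
  · rintro i a b ⟨haF, s, has⟩ ⟨hbF, s', hbs⟩ hab v hvF
    have hss' : s ≠ s' := by
      rintro rfl
      exact hab (Subtype.ext (has.trans hbs.symm))
    have hadj : (Gp G).Adj a b := by
      refine ⟨hab, Or.inl ?_⟩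
      show MVAdj a.1 b.1
      rw [has, hbs]; exact ⟨rfl, hss'⟩
    constructor <;> intro hv
    · have hbv : (Gp G).Adj b v := by
        refine ⟨fun h => by have := congrArg Subtype.val h; rw [hbs, hv] at this; (cases this), Or.inr ?_⟩
        show MVAdj v.1 b.1
        rw [hv, hbs]; exact rfl
      have hva : (Gp G).Adj v a := by
        refine ⟨fun h => by have := congrArg Subtype.val h; rw [has, hv] at this; (cases this), Or.inl ?_⟩
        show MVAdj v.1 a.1
        rw [hv, has]; exact rfl
      exact not_acyclic_of_triangle (H := (Gp G).induce F)
        (a := ⟨a, haF⟩) (b := ⟨b, hbF⟩) (c := ⟨v, hvF⟩) hadj hbv hva hF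
    · have hbv : (Gp G).Adj b v := by
        refine ⟨fun h => by have := congrArg Subtype.val h; rw [hbs, hv] at this; (cases this), Or.inr ?_⟩
        show MVAdj v.1 b.1
        rw [hv, hbs]; exact rfl
      have hva : (Gp G).Adj v a := by
        refine ⟨fun h => by have := congrArg Subtype.val h; rw [has, hv] at this; (cases this), Or.inl ?_⟩
        show MVAdj v.1 a.1
        rw [hv, has]; exact rfl
      exact not_acyclic_of_triangle (H := (Gp G).induce F)
        (a := ⟨a, haF⟩) (b := ⟨b, hbF⟩) (c := ⟨v, hvF⟩) hadj hbv hva hF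
  · rintro i j hij a b ⟨haF, s, t, has⟩ ⟨hbF, s', t', hbs⟩ hab v hvF
    have hst : s ≠ s' ∨ t ≠ t' := by
      by_contra h
      push_neg at h
      obtain ⟨rfl, rfl⟩ := h
      exact hab (Subtype.ext (has.trans hbs.symm))
    have hadj : (Gp G).Adj a b := by
      refine ⟨hab, Or.inl ?_⟩
      show MVAdj a.1 b.1
      rw [has, hbs]; exact ⟨rfl, rfl, hst⟩
    constructor <;> intro hv
    · have hbv : (Gp G).Adj b v := by
        refine ⟨fun h => by have := congrArg Subtype.val h; rw [hbs, hv] at this; (cases this), Or.inr ?_⟩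
        show MVAdj v.1 b.1
        rw [hv, hbs]; exact ⟨rfl, rfl⟩
      have hva : (Gp G).Adj v a := by
        refine ⟨fun h => by have := congrArg Subtype.val h; rw [has, hv] at this; (cases this), Or.inl ?_⟩
        show MVAdj v.1 a.1
        rw [hv, has]; exact ⟨rfl, rfl⟩
      exact not_acyclic_of_triangle (H := (Gp G).induce F)
        (a := ⟨a, haF⟩) (b := ⟨b, hbF⟩) (c := ⟨v, hvF⟩) hadj hbv hva hF
    · have hbv : (Gp G).Adj b v := by
        refine ⟨fun h => by have := congrArg Subtype.val h; rw [hbs, hv] at this; (cases this), Or.inr ?_⟩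
        show MVAdj v.1 b.1
        rw [hv, hbs]; exact ⟨rfl, rfl⟩
      have hva : (Gp G).Adj v a := by
        refine ⟨fun h => by have := congrArg Subtype.val h; rw [has, hv] at this; (cases this), Or.inl ?_⟩
        show MVAdj v.1 a.1
        rw [hv, has]; exact ⟨rfl, rfl⟩
      exact not_acyclic_of_triangle (H := (Gp G).induce F)
        (a := ⟨a, haF⟩) (b := ⟨b, hbF⟩) (c := ⟨v, hvF⟩) hadj hbv hva hF
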